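/- Given γr, γp, kp > 0, the matrix M = [[-γr, -k₁, k₂], [kp, -γp, 0], [0, -1, 0]] is Hurwitz if and only if k₂ > 0 and k₁ > k₂/(γp+γr) - γpγr/kp. -/

import Mathlib

open Matrix

/-- A real square matrix is Hurwitz if every eigenvalue (element of its complex
spectrum) has strictly negative real part. -/
def IsHurwitz {n : ℕ} (A : Matrix (Fin n) (Fin n) ℝ) : Prop :=
  ∀ z ∈ spectrum ℂ (A.map (Complex.ofReal)), z.re < 0


lemma real_root_neg (a₂ a₁ a₀ t : ℝ) (hroot : t^3 + a₂*t^2 + a₁*t + a₀ = 0)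
    (h2 : 0 < a₂) (h0 : 0 < a₀) (hr : a₀ < a₂ * a₁) : t < 0 := by
  by_contra ht
  push_neg at ht
  have ha₁ : 0 < a₁ := by nlinarith
  nlinarith [mul_nonneg (mul_nonneg ht ht) ht, sq_nonneg t]

lemma real_case (a₂ a₁ a₀ p q r : ℝ)
    (h1 : p + q + r = -a₂) (h2 : p*q + q*r + r*p = a₁) (h3 : p*q*r = -a₀) :
    (p < 0 ∧ q < 0 ∧ r < 0) ↔ (0 < a₂ ∧ 0 < a₀ ∧ a₀ < a₂ * a₁) := by
  have ea2 : a₂ = -(p+q+r) := by linarith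
  have ea1 : a₁ = p*q + q*r + r*p := h2.symm
  have ea0 : a₀ = -(p*q*r) := by linarith
  subst ea2 ea1 ea0
  constructor
  · rintro ⟨hp, hq, hr⟩
    have hpq := mul_pos (neg_pos.2 hp) (neg_pos.2 hq)
    have hpqr := mul_pos hpq (neg_pos.2 hr)
    refine ⟨by nlinarith, by nlinarith, ?_⟩
    nlinarith [mul_pos (mul_pos (neg_pos.2 (show p+q < 0 by linarith))
      (neg_pos.2 (show q+r < 0 by linarith))) (neg_pos.2 (show r+p < 0 by linarith))]
  · rintro ⟨ha2, ha0, har⟩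
    refine ⟨?_, ?_, ?_⟩
    · exact real_root_neg _ _ _ p (by ring) ha2 ha0 har
    · exact real_root_neg _ _ _ q (by ring) ha2 ha0 har
    · exact real_root_neg _ _ _ r (by ring) ha2 ha0 har

lemma pair_neg (a₂ a₁ a₀ p P r : ℝ)
    (ea2 : a₂ = -(p+p+r)) (ea1 : a₁ = p^2+P^2+2*p*r) (ea0 : a₀ = -((p^2+P^2)*r)) :
    (p < 0 ∧ r < 0) ↔ (0 < a₂ ∧ 0 < a₀ ∧ a₀ < a₂ * a₁) := by
  subst ea2 ea1 ea0
  constructor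
  · rintro ⟨hp, hr⟩
    have hpP : 0 < p^2 + P^2 := by nlinarith [sq_nonneg P, mul_pos (neg_pos.2 hp) (neg_pos.2 hp)]
    refine ⟨by nlinarith, by nlinarith [mul_pos hpP (neg_pos.2 hr)], ?_⟩
    nlinarith [mul_pos (neg_pos.2 hp) hpP, mul_pos (mul_pos (neg_pos.2 hp) (neg_pos.2 hr)) (neg_pos.2 hr), sq_nonneg (p+r), mul_pos (neg_pos.2 hp) (mul_pos (neg_pos.2 hr) (neg_pos.2 hr))]
  · rintro ⟨ha2, ha0, har⟩
    have hpP : 0 < p^2 + P^2 := by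
      by_contra hc
      push_neg at hc
      have hX : p^2 + P^2 = 0 := le_antisymm hc (by positivity)
      rw [hX] at ha0
      simp at ha0
    have hr : r < 0 := by
      by_contra hrc
      push_neg at hrc
      nlinarith [mul_nonneg (le_of_lt hpP) hrc]
    refine ⟨?_, hr⟩
    by_contra hp
    push_neg at hp
    nlinarith [mul_nonneg hp (add_nonneg (sq_nonneg (p+r)) (sq_nonneg P))]

lemma pair_case (a₂ a₁ a₀ : ℝ) (x z : ℂ)
    (he1 : x + (starRingEnd ℂ) x + z = -(a₂:ℂ))
    (he2 : x * (starRingEnd ℂ) x + (starRingEnd ℂ) x * z + z * x = (a₁:ℂ))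
    (he3 : x * (starRingEnd ℂ) x * z = -(a₀:ℂ)) :
    (x.re < 0 ∧ z.re < 0) ↔ (0 < a₂ ∧ 0 < a₀ ∧ a₀ < a₂ * a₁) := by
  obtain ⟨p, P⟩ := x
  obtain ⟨r, R⟩ := z
  simp only [Complex.ext_iff, Complex.add_re, Complex.add_im, Complex.mul_re, Complex.mul_im,
    Complex.conj_re, Complex.conj_im, Complex.neg_re, Complex.neg_im, Complex.ofReal_re,
    Complex.ofReal_im, neg_zero] at he1 he2 he3
  obtain ⟨h1, h1'⟩ := he1
  obtain ⟨h2, h2'⟩ := he2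
  obtain ⟨h3, h3'⟩ := he3
  have hR : R = 0 := by linarith
  subst hR
  exact pair_neg a₂ a₁ a₀ p P r (by linarith) (by linear_combination -h2)
    (by linear_combination h3)

lemma cubic_crit (a₂ a₁ a₀ : ℝ) (x y z : ℂ)
    (h : ∀ w : ℂ, w^3 + a₂*w^2 + a₁*w + a₀ = (w-x)*(w-y)*(w-z)) :
    (x.re < 0 ∧ y.re < 0 ∧ z.re < 0) ↔ (0 < a₂ ∧ 0 < a₀ ∧ a₀ < a₂ * a₁) := by
  have he1 : x + y + z = -(a₂:ℂ) := by linear_combination (h 1 + h (-1))/2 - h 0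
  have he2 : x*y + y*z + z*x = (a₁:ℂ) := by linear_combination (h (-1) - h 1)/2
  have he3 : x*y*z = -(a₀:ℂ) := by linear_combination h 0
  -- conjugate closure
  have hconj : ∀ w : ℂ, ((starRingEnd ℂ) w - x) * ((starRingEnd ℂ) w - y) * ((starRingEnd ℂ) w - z) = 0 →
      (starRingEnd ℂ) w = x ∨ (starRingEnd ℂ) w = y ∨ (starRingEnd ℂ) w = z := by
    intro w hw
    rcases mul_eq_zero.mp hw with hw' | hw'
    · rcases mul_eq_zero.mp hw' with hw'' | hw''
      · exact Or.inl (sub_eq_zero.mp hw'')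
      · exact Or.inr (Or.inl (sub_eq_zero.mp hw''))
    · exact Or.inr (Or.inr (sub_eq_zero.mp hw'))
  have hrootconj : ∀ w : ℂ, (w - x) * (w - y) * (w - z) = 0 →
      (starRingEnd ℂ) w = x ∨ (starRingEnd ℂ) w = y ∨ (starRingEnd ℂ) w = z := by
    intro w hw
    apply hconj
    have hw0 : w^3 + a₂*w^2 + a₁*w + a₀ = 0 := by rw [h w, hw]
    have : ((starRingEnd ℂ) w)^3 + a₂*((starRingEnd ℂ) w)^2 + a₁*((starRingEnd ℂ) w) + a₀ = 0 := by
      have := congrArg (starRingEnd ℂ) hw0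
      simpa only [map_add, _root_.map_mul, map_pow, map_zero, Complex.conj_ofReal] using this
    rw [← h _]
    exact this
  have hcx : (starRingEnd ℂ) x = x ∨ (starRingEnd ℂ) x = y ∨ (starRingEnd ℂ) x = z :=
    hrootconj x (by ring)
  have hcy : (starRingEnd ℂ) y = x ∨ (starRingEnd ℂ) y = y ∨ (starRingEnd ℂ) y = z :=
    hrootconj y (by ring)
  have hcz : (starRingEnd ℂ) z = x ∨ (starRingEnd ℂ) z = y ∨ (starRingEnd ℂ) z = z :=
    hrootconj z (by ring)
  -- helper for the all-real case
  have allreal : x.im = 0 → y.im = 0 → z.im = 0 →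
      ((x.re < 0 ∧ y.re < 0 ∧ z.re < 0) ↔ (0 < a₂ ∧ 0 < a₀ ∧ a₀ < a₂ * a₁)) := by
    intro hx hy hz
    apply real_case a₂ a₁ a₀ x.re y.re z.re
    · have := congrArg Complex.re he1
      simpa using this
    · have := congrArg Complex.re he2
      simp [Complex.mul_re, hx, hy, hz] at this
      linarith
    · have := congrArg Complex.re he3
      simp [Complex.mul_re, Complex.mul_im, hx, hy, hz] at this
      linarith
  rcases hcx with h1 | h1 | h1
  · -- x real
    have hx : x.im = 0 := Complex.conj_eq_iff_im.mp h1
    rcases hcy with h2 | h2 | h2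
    · -- conj y = x so y = conj x = x, real
      have hy : y.im = 0 := by
        have : y = (starRingEnd ℂ) x := by rw [← h2]; simp
        rw [this, h1]; exact hx
      rcases hcz with h3 | h3 | h3
      · have hz : z.im = 0 := by
          have : z = (starRingEnd ℂ) x := by rw [← h3]; simp
          rw [this, h1]; exact hx
        exact allreal hx hy hz
      · have hz : z.im = 0 := by
          have : z = (starRingEnd ℂ) y := by rw [← h3]; simp
          rw [this, Complex.conj_eq_iff_im.mpr hy]; exact hy
        exact allreal hx hy hz
      · exact allreal hx hy (Complex.conj_eq_iff_im.mp h3)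
    · -- y real
      have hy : y.im = 0 := Complex.conj_eq_iff_im.mp h2
      rcases hcz with h3 | h3 | h3
      · have hz : z.im = 0 := by
          have : z = (starRingEnd ℂ) x := by rw [← h3]; simp
          rw [this, h1]; exact hx
        exact allreal hx hy hz
      · have hz : z.im = 0 := by
          have : z = (starRingEnd ℂ) y := by rw [← h3]; simp
          rw [this, h2]; exact hy
        exact allreal hx hy hz
      · exact allreal hx hy (Complex.conj_eq_iff_im.mp h3)
    · -- conj y = z : pair (y, x)
      have key := pair_case a₂ a₁ a₀ y x
        (by rw [h2]; linear_combination he1)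
        (by rw [h2]; linear_combination he2)
        (by rw [h2]; linear_combination he3)
      have hyz : z.re = y.re := by rw [← h2]; simp
      rw [hyz]
      constructor
      · rintro ⟨hx', hy', _⟩; exact key.mp ⟨hy', hx'⟩
      · intro hh; obtain ⟨hy', hx'⟩ := key.mpr hh; exact ⟨hx', hy', hy'⟩
  · -- conj x = y : pair (x, z)
    have key := pair_case a₂ a₁ a₀ x z
      (by rw [h1]; linear_combination he1)
      (by rw [h1]; linear_combination he2)
      (by rw [h1]; linear_combination he3)
    have hxy : y.re = x.re := by rw [← h1]; simp
    rw [hxy]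
    constructor
    · rintro ⟨hx', _, hz'⟩; exact key.mp ⟨hx', hz'⟩
    · intro hh; obtain ⟨hx', hz'⟩ := key.mpr hh; exact ⟨hx', hx', hz'⟩
  · -- conj x = z : pair (x, y)
    have key := pair_case a₂ a₁ a₀ x y
      (by rw [h1]; linear_combination he1)
      (by rw [h1]; linear_combination he2)
      (by rw [h1]; linear_combination he3)
    have hxz : z.re = x.re := by rw [← h1]; simp
    rw [hxz]
    constructor
    · rintro ⟨hx', hy', _⟩; exact key.mp ⟨hx', hy'⟩
    · intro hh; obtain ⟨hx', hy'⟩ := key.mpr hh; exact ⟨hx', hy', hx'⟩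

lemma cubic_factor (a₂ a₁ a₀ : ℝ) :
    ∃ x y z : ℂ, ∀ w : ℂ, w^3 + a₂*w^2 + a₁*w + a₀ = (w-x)*(w-y)*(w-z) := by
  set p : Polynomial ℂ := Polynomial.X^3 + Polynomial.C (a₂:ℂ) * Polynomial.X^2 +
    Polynomial.C (a₁:ℂ) * Polynomial.X + Polynomial.C (a₀:ℂ) with hp
  have hm : p.Monic := by unfold p; monicity!
  have hdeg : p.natDegree = 3 := by unfold p; compute_degree!
  have hsp := IsAlgClosed.splits (k := ℂ) p
  have hcard : p.roots.card = 3 := by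
    rw [(Polynomial.splits_iff_card_roots).mp hsp, hdeg]
  obtain ⟨x, y, z, hxyz⟩ := Multiset.card_eq_three.mp hcard
  refine ⟨x, y, z, fun w => ?_⟩
  have hfac := hsp.eq_prod_roots_of_monic hm
  have := congrArg (Polynomial.eval w) hfac
  rw [hxyz] at this
  simp [hxyz, hp] at this
  rw [this]; ring


theorem stmt_4 (γr γp kp k₁ k₂ : ℝ) (hγr : 0 < γr) (hγp : 0 < γp) (hkp : 0 < kp) :
    IsHurwitz !![-γr, -k₁, k₂; kp, -γp, 0; 0, -1, 0] ↔
      (0 < k₂ ∧ k₂ / (γp + γr) - γp * γr / kp < k₁) := by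
  obtain ⟨x, y, z, hfac⟩ := cubic_factor (γr+γp) (γp*γr+kp*k₁) (kp*k₂)
  have hspec : ∀ w : ℂ, w ∈ spectrum ℂ
      ((!![-γr, -k₁, k₂; kp, -γp, 0; 0, -1, 0]).map (Complex.ofReal)) ↔
      (w-x)*(w-y)*(w-z) = 0 := by
    intro w
    rw [spectrum.mem_iff, Matrix.isUnit_iff_isUnit_det, isUnit_iff_ne_zero, not_ne_iff,
      Matrix.det_fin_three]
    simp [Matrix.algebraMap_eq_diagonal, Matrix.map_apply, Matrix.diagonal,
      Matrix.vecHead, Matrix.vecTail]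
    constructor
    · intro h
      have h' : (w-x)*(w-y)*(w-z) = 0 := by
        rw [← hfac w]; push_cast; linear_combination h
      simpa [mul_eq_zero] using h'
    · intro h
      have h' : (w-x)*(w-y)*(w-z) = 0 := by
        rcases h with (h | h) | h <;> simp [h]
      have h2 := (hfac w).trans h'
      push_cast at h2
      linear_combination h2
  have hiff : IsHurwitz !![-γr, -k₁, k₂; kp, -γp, 0; 0, -1, 0] ↔
      (x.re < 0 ∧ y.re < 0 ∧ z.re < 0) := by
    unfold IsHurwitz
    constructor
    · intro h
      refine ⟨h x ((hspec x).mpr (by ring)), h y ((hspec y).mpr (by ring)),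
        h z ((hspec z).mpr (by ring))⟩
    · rintro ⟨hx, hy, hz⟩ w hw
      rcases mul_eq_zero.mp ((hspec w).mp hw) with h | h
      · rcases mul_eq_zero.mp h with h' | h'
        · rw [sub_eq_zero.mp h']; exact hx
        · rw [sub_eq_zero.mp h']; exact hy
      · rw [sub_eq_zero.mp h]; exact hz
  rw [hiff, cubic_crit (γr+γp) (γp*γr+kp*k₁) (kp*k₂) x y z hfac]
  have hs : (0:ℝ) < γp + γr := by linarith
  constructor
  · rintro ⟨_, h0, hlt⟩
    refine ⟨by nlinarith, ?_⟩
    rw [div_sub_div _ _ (ne_of_gt hs) (ne_of_gt hkp), div_lt_iff₀ (by positivity)]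
    nlinarith
  · rintro ⟨hk2, hlt⟩
    rw [div_sub_div _ _ (ne_of_gt hs) (ne_of_gt hkp), div_lt_iff₀ (by positivity)] at hlt
    refine ⟨by linarith, by positivity, by nlinarith⟩
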